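/- Let α, β, γ ∈ (0,1) with β + γ ≠ 1 and α + γ ≠ 1. Then: (i) for every q ∈ [0, min(1−β, γ)] there exists a constant C > 0, depending only on α, β, γ, q, such that 𝔅_1(a,b) ≤ C · |a|^{−q} · |b|^{−γ+q} for all real a, b with a, b nonzero (and b − a ≠ 0 when needed); (ii) for every q ∈ [0, min(1−α, γ)] there exists a constant C > 0, depending only on α, β, γ, q, such that 𝔅_2(a,b) ≤ C · |a|^{−q} · |b−a|^{−γ+q} for all real a, b with a and b − a nonzero. -/

import Mathlib

open MeasureTheory Real ENNReal

/-- `𝔅_1(a,b) := ∫_0^{1/2} u^{−β} (1−u)^{−α} |au − b|^{−γ} du ∈ [0,∞]`. -/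
noncomputable def B1 (α β γ a b : ℝ) : ℝ≥0∞ :=
  ∫⁻ u in Set.Ioo (0 : ℝ) (1/2),
    ENNReal.ofReal (u ^ (-β) * (1 - u) ^ (-α) * |a * u - b| ^ (-γ))

/-- `𝔅_2(a,b) := ∫_{1/2}^1 u^{−β} (1−u)^{−α} |au − b|^{−γ} du ∈ [0,∞]`. -/
noncomputable def B2 (α β γ a b : ℝ) : ℝ≥0∞ :=
  ∫⁻ u in Set.Ioo (1/2 : ℝ) 1,
    ENNReal.ofReal (u ^ (-β) * (1 - u) ^ (-α) * |a * u - b| ^ (-γ))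

section Helpers
open Set

lemma lint_Ioo_rpow {s T : ℝ} (hs : -1 < s) (hT : 0 < T) :
    ∫⁻ u in Set.Ioo (0:ℝ) T, ENNReal.ofReal (u ^ s) = ENNReal.ofReal (T ^ (s+1) / (s+1)) := by
  have hint : IntegrableOn (fun u : ℝ => u ^ s) (Set.Ioo 0 T) := by
    have := intervalIntegral.intervalIntegrable_rpow' (a := 0) (b := T) hs
    rwa [intervalIntegrable_iff_integrableOn_Ioo_of_le hT.le] at this
  rw [← ofReal_integral_eq_lintegral_ofReal hint ?_]
  · congr 1
    have h2 : ∫ u in Set.Ioo (0:ℝ) T, u ^ s = ∫ u in (0:ℝ)..T, u ^ s := by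
      rw [intervalIntegral.integral_of_le hT.le, integral_Ioc_eq_integral_Ioo]
    rw [h2, integral_rpow (Or.inl hs)]
    rw [Real.zero_rpow (by linarith : s + 1 ≠ 0)]
    ring_nf
  · filter_upwards [ae_restrict_mem measurableSet_Ioo] with x hx
    exact Real.rpow_nonneg hx.1.le _

lemma lint_Ioi_rpow {s T : ℝ} (hs : s < -1) (hT : 0 < T) :
    ∫⁻ u in Set.Ioi T, ENNReal.ofReal (u ^ s) = ENNReal.ofReal (-T ^ (s+1) / (s+1)) := by
  rw [← ofReal_integral_eq_lintegral_ofReal (integrableOn_Ioi_rpow_of_lt hs hT) ?_]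
  · rw [integral_Ioi_rpow_of_lt hs hT]
  · filter_upwards [ae_restrict_mem measurableSet_Ioi] with x hx
    exact Real.rpow_nonneg (hT.trans hx).le _

lemma lint_shift (f : ℝ → ℝ≥0∞) (c : ℝ) (s : Set ℝ) :
    ∫⁻ u in s, f (u - c) = ∫⁻ v in (fun u => u - c) '' s, f v :=
  (measurePreserving_sub_right volume c).setLIntegral_comp_emb
    (MeasurableEquiv.subRight c).measurableEmbedding f s

lemma lint_reflect (f : ℝ → ℝ≥0∞) (t : Set ℝ) :
    ∫⁻ u in (fun x : ℝ => 1 - x) ⁻¹' t, f (1 - u) = ∫⁻ v in t, f v :=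
  (Measure.measurePreserving_sub_left volume 1).setLIntegral_comp_preimage_emb
    (MeasurableEquiv.subLeft 1).measurableEmbedding f t

lemma lint_neg (f : ℝ → ℝ≥0∞) (s : Set ℝ) :
    ∫⁻ u in s, f (-u) = ∫⁻ v in Neg.neg '' s, f v :=
  (Measure.measurePreserving_neg volume).setLIntegral_comp_emb
    (MeasurableEquiv.neg ℝ).measurableEmbedding f s

lemma lint_abs_Ioo_pos {γ T : ℝ} (hγ1 : γ < 1) (hT : 0 < T) :
    ∫⁻ v in Set.Ioo (0:ℝ) T, ENNReal.ofReal (|v| ^ (-γ))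
      = ENNReal.ofReal (T ^ (1-γ) / (1-γ)) := by
  have : ∫⁻ v in Set.Ioo (0:ℝ) T, ENNReal.ofReal (|v| ^ (-γ))
      = ∫⁻ v in Set.Ioo (0:ℝ) T, ENNReal.ofReal (v ^ (-γ)) := by
    apply setLIntegral_congr_fun measurableSet_Ioo
    intro x hx; dsimp only
    rw [abs_of_pos hx.1]
  rw [this, lint_Ioo_rpow (by linarith) hT, show -γ+1 = 1-γ from by ring]

lemma lint_abs_Icc {γ T : ℝ} (hγ1 : γ < 1) (hT : 0 < T) :
    ∫⁻ v in Set.Icc (-T) T, ENNReal.ofReal (|v| ^ (-γ))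
      ≤ ENNReal.ofReal (2 * (T ^ (1-γ) / (1-γ))) := by
  have hneg : ∫⁻ v in Set.Ioo (-T) (0:ℝ), ENNReal.ofReal (|v| ^ (-γ))
      = ENNReal.ofReal (T ^ (1-γ) / (1-γ)) := by
    have him : Neg.neg '' Set.Ioo (0:ℝ) T = Set.Ioo (-T) 0 := by
      rw [Set.image_neg_Ioo]; norm_num
    rw [← him, ← lint_neg (fun v => ENNReal.ofReal (|v| ^ (-γ))) (Set.Ioo 0 T)]
    simp_rw [abs_neg]
    exact lint_abs_Ioo_pos hγ1 hT
  have hcover : Set.Icc (-T) T ⊆ Set.Ioo (-T) (0:ℝ) ∪ ({(-T), 0, T} ∪ Set.Ioo (0:ℝ) T) := by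
    intro x hx
    rcases lt_trichotomy x 0 with h | h | h
    · rcases eq_or_lt_of_le hx.1 with h' | h'
      · exact Or.inr (Or.inl (by simp [← h']))
      · exact Or.inl ⟨h', h⟩
    · exact Or.inr (Or.inl (by simp [h]))
    · rcases eq_or_lt_of_le hx.2 with h' | h'
      · exact Or.inr (Or.inl (by simp [h']))
      · exact Or.inr (Or.inr ⟨h, h'⟩)
  calc ∫⁻ v in Set.Icc (-T) T, ENNReal.ofReal (|v| ^ (-γ))
      ≤ ∫⁻ v in Set.Ioo (-T) (0:ℝ) ∪ ({(-T), 0, T} ∪ Set.Ioo (0:ℝ) T),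
          ENNReal.ofReal (|v| ^ (-γ)) := lintegral_mono_set hcover
    _ ≤ (∫⁻ v in Set.Ioo (-T) (0:ℝ), ENNReal.ofReal (|v| ^ (-γ)))
        + ((∫⁻ v in ({(-T), 0, T} : Set ℝ), ENNReal.ofReal (|v| ^ (-γ)))
        + ∫⁻ v in Set.Ioo (0:ℝ) T, ENNReal.ofReal (|v| ^ (-γ))) := by
        refine (lintegral_union_le _ _ _).trans ?_
        exact add_le_add le_rfl (lintegral_union_le _ _ _)
    _ = ENNReal.ofReal (T ^ (1-γ) / (1-γ)) + (0 + ENNReal.ofReal (T ^ (1-γ) / (1-γ))) := by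
        rw [hneg, lint_abs_Ioo_pos hγ1 hT, setLIntegral_measure_zero]
        exact (Set.toFinite _).measure_zero volume
    _ ≤ ENNReal.ofReal (2 * (T ^ (1-γ) / (1-γ))) := by
        have h1γ : (0:ℝ) ≤ T ^ (1-γ) / (1-γ) :=
          div_nonneg (Real.rpow_nonneg hT.le _) (by linarith)
        rw [zero_add, ← ENNReal.ofReal_add h1γ h1γ]
        exact ENNReal.ofReal_le_ofReal (by linarith)

lemma scale_rpow (c k e : ℝ) (hc : 0 ≤ c) (hk : 0 < k) : (c/k) ^ e = c ^ e * (1/k) ^ e := by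
  rw [show c/k = c * (1/k) by ring, Real.mul_rpow hc (by positivity)]

lemma piece1 {β γ : ℝ} (hβ0 : 0 < β) (hβ1 : β < 1) (hγ0 : 0 < γ) :
    ∃ K : ℝ, 0 < K ∧ ∀ c : ℝ, 0 < c →
      ∫⁻ u in Set.Ioo (0:ℝ) (c/2), ENNReal.ofReal (u ^ (-β) * |u - c| ^ (-γ))
        ≤ ENNReal.ofReal (K * c ^ (1-β-γ)) := by
  have hK : (0:ℝ) < (1/2:ℝ) ^ (-γ) * ((1/2:ℝ) ^ (-β+1) / (-β+1)) := by
    apply mul_pos (Real.rpow_pos_of_pos (by norm_num) _)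
    exact div_pos (Real.rpow_pos_of_pos (by norm_num) _) (by linarith)
  refine ⟨_, hK, fun c hc => ?_⟩
  have hc2 : (0:ℝ) < c/2 := by linarith
  calc ∫⁻ u in Set.Ioo (0:ℝ) (c/2), ENNReal.ofReal (u ^ (-β) * |u - c| ^ (-γ))
      ≤ ∫⁻ u in Set.Ioo (0:ℝ) (c/2), ENNReal.ofReal ((c/2) ^ (-γ) * u ^ (-β)) := by
        apply setLIntegral_mono' measurableSet_Ioo
        intro u hu
        apply ENNReal.ofReal_le_ofReal
        rw [mul_comm]
        apply mul_le_mul_of_nonneg_right _ (Real.rpow_nonneg hu.1.le _)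
        apply Real.rpow_le_rpow_of_nonpos hc2 _ (by linarith)
        rw [abs_of_neg (by linarith [hu.2] : u - c < 0)]
        linarith [hu.2]
    _ = ENNReal.ofReal ((c/2) ^ (-γ)) * ∫⁻ u in Set.Ioo (0:ℝ) (c/2), ENNReal.ofReal (u ^ (-β)) := by
        simp_rw [ENNReal.ofReal_mul (Real.rpow_nonneg hc2.le _)]
        exact lintegral_const_mul' _ _ ENNReal.ofReal_ne_top
    _ = ENNReal.ofReal ((c/2) ^ (-γ) * ((c/2) ^ (-β+1) / (-β+1))) := by
        rw [lint_Ioo_rpow (by linarith) hc2,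
          ← ENNReal.ofReal_mul (Real.rpow_nonneg hc2.le _)]
    _ ≤ ENNReal.ofReal ((1/2:ℝ) ^ (-γ) * ((1/2:ℝ) ^ (-β+1) / (-β+1)) * c ^ (1-β-γ)) := by
        apply ENNReal.ofReal_le_ofReal
        apply le_of_eq
        rw [scale_rpow c 2 (-γ) hc.le (by norm_num), scale_rpow c 2 (-β+1) hc.le (by norm_num)]
        have e1 : c ^ (-γ) * c ^ (-β+1) = c ^ (1-β-γ) := by
          rw [← Real.rpow_add hc]; congr 1; ring
        rw [← e1]; ring

lemma lint_shift' (f : ℝ → ℝ≥0∞) (c : ℝ) (t : Set ℝ) :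
    ∫⁻ u in (fun x : ℝ => x - c) ⁻¹' t, f (u - c) = ∫⁻ v in t, f v :=
  (measurePreserving_sub_right volume c).setLIntegral_comp_preimage_emb
    (MeasurableEquiv.subRight c).measurableEmbedding f t

lemma piece2 {β γ : ℝ} (hβ0 : 0 < β) (hγ0 : 0 < γ) (hγ1 : γ < 1) :
    ∃ K : ℝ, 0 < K ∧ ∀ c : ℝ, 0 < c →
      ∫⁻ u in Set.Icc (c/2) (3*c/2), ENNReal.ofReal (u ^ (-β) * |u - c| ^ (-γ))
        ≤ ENNReal.ofReal (K * c ^ (1-β-γ)) := by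
  have hK : (0:ℝ) < (1/2:ℝ) ^ (-β) * (2 * ((1/2:ℝ) ^ (1-γ) / (1-γ))) := by
    apply mul_pos (Real.rpow_pos_of_pos (by norm_num) _)
    exact _root_.mul_pos two_pos (div_pos (Real.rpow_pos_of_pos (by norm_num) _) (by linarith))
  refine ⟨_, hK, fun c hc => ?_⟩
  have hc2 : (0:ℝ) < c/2 := by linarith
  calc ∫⁻ u in Set.Icc (c/2) (3*c/2), ENNReal.ofReal (u ^ (-β) * |u - c| ^ (-γ))
      ≤ ∫⁻ u in Set.Icc (c/2) (3*c/2), ENNReal.ofReal ((c/2) ^ (-β) * |u - c| ^ (-γ)) := by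
        apply setLIntegral_mono' measurableSet_Icc
        intro u hu
        apply ENNReal.ofReal_le_ofReal
        apply mul_le_mul_of_nonneg_right _ (Real.rpow_nonneg (abs_nonneg _) _)
        exact Real.rpow_le_rpow_of_nonpos hc2 hu.1 (by linarith)
    _ = ENNReal.ofReal ((c/2) ^ (-β)) *
          ∫⁻ u in Set.Icc (c/2) (3*c/2), ENNReal.ofReal (|u - c| ^ (-γ)) := by
        simp_rw [ENNReal.ofReal_mul (Real.rpow_nonneg hc2.le _)]
        exact lintegral_const_mul' _ _ ENNReal.ofReal_ne_top
    _ ≤ ENNReal.ofReal ((c/2) ^ (-β)) * ENNReal.ofReal (2 * ((c/2) ^ (1-γ) / (1-γ))) := by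
        apply mul_le_mul_right ?_ _
        have hset : Set.Icc (c/2) (3*c/2) = (fun x : ℝ => x - c) ⁻¹' Set.Icc (-(c/2)) (c/2) := by
          rw [Set.preimage_sub_const_Icc]
          congr 1 <;> ring
        rw [hset, lint_shift' (fun v => ENNReal.ofReal (|v| ^ (-γ))) c]
        exact lint_abs_Icc hγ1 hc2
    _ ≤ ENNReal.ofReal ((1/2:ℝ) ^ (-β) * (2 * ((1/2:ℝ) ^ (1-γ) / (1-γ))) * c ^ (1-β-γ)) := by
        rw [← ENNReal.ofReal_mul (Real.rpow_nonneg hc2.le _)]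
        apply ENNReal.ofReal_le_ofReal
        apply le_of_eq
        rw [scale_rpow c 2 (-β) hc.le (by norm_num), scale_rpow c 2 (1-γ) hc.le (by norm_num)]
        have e1 : c ^ (-β) * c ^ (1-γ) = c ^ (1-β-γ) := by
          rw [← Real.rpow_add hc]; congr 1; ring
        rw [← e1]; ring

lemma inv_base_rpow (k e : ℝ) (hk : 0 < k) : (1/k) ^ e = k ^ (-e) := by
  rw [one_div, Real.inv_rpow hk.le, Real.rpow_neg hk.le]

lemma piece3 {β γ : ℝ} (hβ0 : 0 < β) (hβ1 : β < 1) (hγ0 : 0 < γ) (hγ1 : γ < 1)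
    (h1 : β + γ ≠ 1) :
    ∃ K : ℝ, 0 < K ∧ ∀ c : ℝ, 0 < c → c ≤ 1 →
      ∫⁻ u in Set.Ici (3*c/2) ∩ Set.Ioo (0:ℝ) (1/2),
          ENNReal.ofReal (u ^ (-β) * |u - c| ^ (-γ))
        ≤ ENNReal.ofReal (K * c ^ (min (1-β) γ - γ)) := by
  have key : ∀ c : ℝ, 0 < c →
      ∫⁻ u in Set.Ici (3*c/2) ∩ Set.Ioo (0:ℝ) (1/2),
          ENNReal.ofReal (u ^ (-β) * |u - c| ^ (-γ))
        ≤ ENNReal.ofReal ((3:ℝ)^γ) *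
            ∫⁻ u in Set.Ici (3*c/2) ∩ Set.Ioo (0:ℝ) (1/2),
              ENNReal.ofReal (u ^ (-β-γ)) := by
    intro c hc
    rw [← lintegral_const_mul' _ _ ENNReal.ofReal_ne_top]
    apply setLIntegral_mono' (measurableSet_Ici.inter measurableSet_Ioo)
    intro u hu
    obtain ⟨hu1, hu2⟩ := hu
    rw [Set.mem_Ici] at hu1
    rw [← ENNReal.ofReal_mul (Real.rpow_nonneg (by norm_num) _)]
    apply ENNReal.ofReal_le_ofReal
    have hu0 : 0 < u := hu2.1
    have habs : u/3 ≤ |u - c| := by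
      rw [abs_of_pos (by linarith [hu1] : (0:ℝ) < u - c)]
      linarith [hu1]
    calc u ^ (-β) * |u - c| ^ (-γ)
        ≤ u ^ (-β) * (u/3) ^ (-γ) := by
          apply mul_le_mul_of_nonneg_left _ (Real.rpow_nonneg hu0.le _)
          exact Real.rpow_le_rpow_of_nonpos (by linarith) habs (by linarith)
      _ = 3 ^ γ * u ^ (-β-γ) := by
          rw [scale_rpow u 3 (-γ) hu0.le (by norm_num), inv_base_rpow 3 (-γ) (by norm_num),
            neg_neg]
          rw [show (-β-γ : ℝ) = -β + -γ by ring, Real.rpow_add hu0]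
          ring
  rcases h1.lt_or_gt with hlt | hgt
  · -- β + γ < 1, min = γ
    have hm : min (1-β) γ = γ := min_eq_right (by linarith)
    refine ⟨(3:ℝ)^γ * ((1/2:ℝ) ^ (-β-γ+1) / (-β-γ+1)), by
      apply _root_.mul_pos (Real.rpow_pos_of_pos (by norm_num) _)
      exact div_pos (Real.rpow_pos_of_pos (by norm_num) _) (by linarith), fun c hc hc1 => ?_⟩
    calc ∫⁻ u in Set.Ici (3*c/2) ∩ Set.Ioo (0:ℝ) (1/2),
            ENNReal.ofReal (u ^ (-β) * |u - c| ^ (-γ))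
        ≤ ENNReal.ofReal ((3:ℝ)^γ) *
            ∫⁻ u in Set.Ici (3*c/2) ∩ Set.Ioo (0:ℝ) (1/2),
              ENNReal.ofReal (u ^ (-β-γ)) := key c hc
      _ ≤ ENNReal.ofReal ((3:ℝ)^γ) * ∫⁻ u in Set.Ioo (0:ℝ) (1/2),
              ENNReal.ofReal (u ^ (-β-γ)) := by
          exact mul_le_mul_right (lintegral_mono_set Set.inter_subset_right) _
      _ = ENNReal.ofReal ((3:ℝ)^γ) * ENNReal.ofReal ((1/2:ℝ) ^ (-β-γ+1) / (-β-γ+1)) := by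
          rw [lint_Ioo_rpow (by linarith) (by norm_num)]
      _ = ENNReal.ofReal ((3:ℝ)^γ * ((1/2:ℝ) ^ (-β-γ+1) / (-β-γ+1)) * c ^ (min (1-β) γ - γ)) := by
          rw [hm, sub_self, Real.rpow_zero, mul_one,
            ← ENNReal.ofReal_mul (Real.rpow_nonneg (by norm_num) _)]
  · -- 1 < β + γ, min = 1 - β
    have hm : min (1-β) γ = 1-β := min_eq_left (by linarith)
    refine ⟨(3:ℝ)^γ / (β+γ-1), by
      exact div_pos (Real.rpow_pos_of_pos (by norm_num) _) (by linarith), fun c hc hc1 => ?_⟩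
    calc ∫⁻ u in Set.Ici (3*c/2) ∩ Set.Ioo (0:ℝ) (1/2),
            ENNReal.ofReal (u ^ (-β) * |u - c| ^ (-γ))
        ≤ ENNReal.ofReal ((3:ℝ)^γ) *
            ∫⁻ u in Set.Ici (3*c/2) ∩ Set.Ioo (0:ℝ) (1/2),
              ENNReal.ofReal (u ^ (-β-γ)) := key c hc
      _ ≤ ENNReal.ofReal ((3:ℝ)^γ) * ∫⁻ u in Set.Ioi c,
              ENNReal.ofReal (u ^ (-β-γ)) := by
          apply mul_le_mul_right (lintegral_mono_set ?_) _
          intro x ⟨hx1, _⟩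
          simp only [Set.mem_Ioi]
          simp only [Set.mem_Ici] at hx1
          linarith
      _ = ENNReal.ofReal ((3:ℝ)^γ) * ENNReal.ofReal (-c ^ (-β-γ+1) / (-β-γ+1)) := by
          rw [lint_Ioi_rpow (by linarith) hc]
      _ = ENNReal.ofReal ((3:ℝ)^γ / (β+γ-1) * c ^ (min (1-β) γ - γ)) := by
          rw [← ENNReal.ofReal_mul (Real.rpow_nonneg (by norm_num) _)]
          congr 1
          rw [hm, show (1-β-γ : ℝ) = -β-γ+1 by ring]
          have hne : (-β-γ+1 : ℝ) ≠ 0 := by intro h; apply hgt.ne'; linarith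
          have hne2 : (β+γ-1 : ℝ) ≠ 0 := by intro h; apply hgt.ne'; linarith
          field_simp
          ring

lemma coreJ_small {β γ : ℝ} (hβ0 : 0 < β) (hβ1 : β < 1) (hγ0 : 0 < γ) (hγ1 : γ < 1)
    (h1 : β + γ ≠ 1) :
    ∃ C : ℝ, 0 < C ∧ ∀ c : ℝ, 0 < c → c ≤ 1 →
      ∫⁻ u in Set.Ioo (0:ℝ) (1/2), ENNReal.ofReal (u ^ (-β) * |u - c| ^ (-γ))
        ≤ ENNReal.ofReal (C * c ^ (min (1-β) γ - γ)) := by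
  obtain ⟨K1, hK1, hP1⟩ := piece1 hβ0 hβ1 hγ0
  obtain ⟨K2, hK2, hP2⟩ := piece2 hβ0 hγ0 hγ1
  obtain ⟨K3, hK3, hP3⟩ := piece3 hβ0 hβ1 hγ0 hγ1 h1
  refine ⟨K1+K2+K3, by positivity, fun c hc hc1 => ?_⟩
  have hcov : Set.Ioo (0:ℝ) (1/2) ⊆
      Set.Ioo 0 (c/2) ∪ (Set.Icc (c/2) (3*c/2) ∪ (Set.Ici (3*c/2) ∩ Set.Ioo 0 (1/2))) := by
    intro x hx
    rcases lt_or_ge x (c/2) with h | h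
    · exact Or.inl ⟨hx.1, h⟩
    rcases le_or_gt x (3*c/2) with h' | h'
    · exact Or.inr (Or.inl ⟨h, h'⟩)
    · exact Or.inr (Or.inr ⟨h'.le, hx⟩)
  have hexp : c ^ (1-β-γ) ≤ c ^ (min (1-β) γ - γ) := by
    apply Real.rpow_le_rpow_of_exponent_ge hc hc1
    have := min_le_left (1-β) γ; linarith
  have hexp0 : (0:ℝ) ≤ c ^ (min (1-β) γ - γ) := Real.rpow_nonneg hc.le _
  calc ∫⁻ u in Set.Ioo (0:ℝ) (1/2), ENNReal.ofReal (u ^ (-β) * |u - c| ^ (-γ))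
      ≤ ∫⁻ u in Set.Ioo 0 (c/2) ∪ (Set.Icc (c/2) (3*c/2) ∪
            (Set.Ici (3*c/2) ∩ Set.Ioo 0 (1/2))),
          ENNReal.ofReal (u ^ (-β) * |u - c| ^ (-γ)) := lintegral_mono_set hcov
    _ ≤ (∫⁻ u in Set.Ioo (0:ℝ) (c/2), ENNReal.ofReal (u ^ (-β) * |u - c| ^ (-γ)))
        + ((∫⁻ u in Set.Icc (c/2) (3*c/2), ENNReal.ofReal (u ^ (-β) * |u - c| ^ (-γ)))
        + ∫⁻ u in Set.Ici (3*c/2) ∩ Set.Ioo (0:ℝ) (1/2),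
            ENNReal.ofReal (u ^ (-β) * |u - c| ^ (-γ))) :=
        (lintegral_union_le _ _ _).trans (add_le_add le_rfl (lintegral_union_le _ _ _))
    _ ≤ ENNReal.ofReal (K1 * c ^ (1-β-γ)) + (ENNReal.ofReal (K2 * c ^ (1-β-γ))
        + ENNReal.ofReal (K3 * c ^ (min (1-β) γ - γ))) :=
        add_le_add (hP1 c hc) (add_le_add (hP2 c hc) (hP3 c hc hc1))
    _ ≤ ENNReal.ofReal ((K1+K2+K3) * c ^ (min (1-β) γ - γ)) := by
        rw [← ENNReal.ofReal_add (by positivity) (by positivity),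
          ← ENNReal.ofReal_add (by positivity) (by positivity)]
        apply ENNReal.ofReal_le_ofReal
        nlinarith [mul_le_mul_of_nonneg_left hexp hK1.le,
          mul_le_mul_of_nonneg_left hexp hK2.le]

lemma core {β γ : ℝ} (hβ0 : 0 < β) (hβ1 : β < 1) (hγ0 : 0 < γ) (hγ1 : γ < 1)
    (h1 : β + γ ≠ 1) {q : ℝ} (hq : q ∈ Set.Icc 0 (min (1-β) γ)) :
    ∃ C : ℝ, 0 < C ∧ ∀ a b : ℝ, a ≠ 0 → b ≠ 0 →
      ∫⁻ u in Set.Ioo (0:ℝ) (1/2), ENNReal.ofReal (u ^ (-β) * |a*u - b| ^ (-γ))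
        ≤ ENNReal.ofReal (C * |a| ^ (-q) * |b| ^ (-γ+q)) := by
  obtain ⟨CB, hCB, hB⟩ := coreJ_small hβ0 hβ1 hγ0 hγ1 h1
  set CA : ℝ := (2:ℝ)^γ * ((1/2:ℝ) ^ (-β+1) / (-β+1)) with hCAdef
  have hCA : 0 < CA := by
    apply _root_.mul_pos (Real.rpow_pos_of_pos (by norm_num) _)
    exact div_pos (Real.rpow_pos_of_pos (by norm_num) _) (by linarith)
  refine ⟨CA + CB, by positivity, fun a b ha hb => ?_⟩
  have ha0 : (0:ℝ) < |a| := abs_pos.mpr ha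
  have hb0 : (0:ℝ) < |b| := abs_pos.mpr hb
  set ρ : ℝ := |b|/|a| with hρdef
  have hρ0 : 0 < ρ := div_pos hb0 ha0
  have hb' : |b| = ρ * |a| := by rw [hρdef, div_mul_cancel₀ _ ha0.ne']
  have habsc : |b/a| = ρ := abs_div b a
  -- factor out |a|^{-γ}
  have hfac : ∀ u : ℝ, u ^ (-β) * |a*u - b| ^ (-γ)
      = |a| ^ (-γ) * (u ^ (-β) * |u - b/a| ^ (-γ)) := by
    intro u
    have h : |a*u - b| = |a| * |u - b/a| := by
      rw [← abs_mul]; congr 1; field_simp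
    rw [h, Real.mul_rpow (abs_nonneg a) (abs_nonneg _)]; ring
  have hsplit : ∫⁻ u in Set.Ioo (0:ℝ) (1/2), ENNReal.ofReal (u ^ (-β) * |a*u - b| ^ (-γ))
      = ENNReal.ofReal (|a| ^ (-γ)) *
        ∫⁻ u in Set.Ioo (0:ℝ) (1/2), ENNReal.ofReal (u ^ (-β) * |u - b/a| ^ (-γ)) := by
    simp_rw [hfac, ENNReal.ofReal_mul (Real.rpow_nonneg (abs_nonneg a) _)]
    exact lintegral_const_mul' _ _ ENNReal.ofReal_ne_top
  -- final comparison helper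
  have final : ∀ X e : ℝ, 0 ≤ X → X * ρ ^ e ≤ (CA + CB) * ρ ^ (-γ+q) →
      ENNReal.ofReal (|a| ^ (-γ)) * ENNReal.ofReal (X * ρ ^ e)
        ≤ ENNReal.ofReal ((CA + CB) * |a| ^ (-q) * |b| ^ (-γ+q)) := by
    intro X e hX hkey
    rw [← ENNReal.ofReal_mul (Real.rpow_nonneg (abs_nonneg a) _)]
    apply ENNReal.ofReal_le_ofReal
    have e2 : |b| ^ (-γ+q) = ρ ^ (-γ+q) * |a| ^ (-γ+q) := by
      rw [hb', Real.mul_rpow hρ0.le ha0.le]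
    have e3 : |a| ^ (-q) * |a| ^ (-γ+q) = |a| ^ (-γ) := by
      rw [← Real.rpow_add ha0]; congr 1; ring
    calc |a| ^ (-γ) * (X * ρ ^ e)
        ≤ |a| ^ (-γ) * ((CA + CB) * ρ ^ (-γ+q)) :=
          mul_le_mul_of_nonneg_left hkey (Real.rpow_nonneg (abs_nonneg a) _)
      _ = (CA + CB) * |a| ^ (-q) * (ρ ^ (-γ+q) * |a| ^ (-γ+q)) := by rw [← e3]; ring
      _ = (CA + CB) * |a| ^ (-q) * |b| ^ (-γ+q) := by rw [← e2]
  rw [hsplit]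
  rcases le_or_gt 1 ρ with hρ1 | hρ1
  · -- |b| ≥ |a| : crude bound
    have hJ : ∫⁻ u in Set.Ioo (0:ℝ) (1/2), ENNReal.ofReal (u ^ (-β) * |u - b/a| ^ (-γ))
        ≤ ENNReal.ofReal ((CA * ρ ^ (-γ))) := by
      calc ∫⁻ u in Set.Ioo (0:ℝ) (1/2), ENNReal.ofReal (u ^ (-β) * |u - b/a| ^ (-γ))
          ≤ ∫⁻ u in Set.Ioo (0:ℝ) (1/2), ENNReal.ofReal ((ρ/2) ^ (-γ) * u ^ (-β)) := by
            apply setLIntegral_mono' measurableSet_Ioo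
            intro u hu
            apply ENNReal.ofReal_le_ofReal
            rw [mul_comm]
            apply mul_le_mul_of_nonneg_right _ (Real.rpow_nonneg hu.1.le _)
            apply Real.rpow_le_rpow_of_nonpos (by linarith) _ (by linarith)
            have h5 : |b/a| - |u| ≤ |u - b/a| := by
              rw [abs_sub_comm]; exact abs_sub_abs_le_abs_sub _ _
            rw [habsc, abs_of_pos hu.1] at h5
            have := hu.2
            linarith
        _ = ENNReal.ofReal ((ρ/2) ^ (-γ)) *
              ∫⁻ u in Set.Ioo (0:ℝ) (1/2), ENNReal.ofReal (u ^ (-β)) := by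
            have hnn : (0:ℝ) ≤ (ρ/2) ^ (-γ) := Real.rpow_nonneg (by positivity) _
            simp_rw [ENNReal.ofReal_mul hnn]
            exact lintegral_const_mul' _ _ ENNReal.ofReal_ne_top
        _ = ENNReal.ofReal ((ρ/2) ^ (-γ) * ((1/2:ℝ) ^ (-β+1) / (-β+1))) := by
            rw [lint_Ioo_rpow (by linarith) (by norm_num),
              ← ENNReal.ofReal_mul (Real.rpow_nonneg (by positivity) _)]
        _ = ENNReal.ofReal ((CA * ρ ^ (-γ))) := by
            congr 1
            rw [scale_rpow ρ 2 (-γ) hρ0.le (by norm_num), inv_base_rpow 2 (-γ) (by norm_num),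
              neg_neg, hCAdef]
            ring
    refine (mul_le_mul_right hJ _).trans (final CA (-γ) ?_ ?_)
    · positivity
    · apply mul_le_mul (by linarith)
        (Real.rpow_le_rpow_of_exponent_le hρ1 (by linarith [hq.1]))
        (Real.rpow_nonneg hρ0.le _) (by linarith)
  · -- |b| < |a| : use coreJ_small with ρ
    have hae : ∫⁻ u in Set.Ioo (0:ℝ) (1/2), ENNReal.ofReal (u ^ (-β) * |u - b/a| ^ (-γ))
        ≤ ∫⁻ u in Set.Ioo (0:ℝ) (1/2), ENNReal.ofReal (u ^ (-β) * |u - ρ| ^ (-γ)) := by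
      apply lintegral_mono_ae
      have hsing : ∀ᵐ u : ℝ ∂(volume.restrict (Set.Ioo (0:ℝ) (1/2))), u ≠ ρ := by
        apply ae_restrict_of_ae
        rw [ae_iff]
        have : {x : ℝ | ¬ x ≠ ρ} = {ρ} := by ext x; simp
        rw [this]
        exact Real.volume_singleton
      filter_upwards [hsing, ae_restrict_mem measurableSet_Ioo] with u hu hu2
      apply ENNReal.ofReal_le_ofReal
      apply mul_le_mul_of_nonneg_left _ (Real.rpow_nonneg hu2.1.le _)
      apply Real.rpow_le_rpow_of_nonpos (abs_pos.mpr (sub_ne_zero.mpr hu)) _ (by linarith)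
      calc |u - ρ| = |(|u| - |b/a|)| := by rw [habsc, abs_of_pos hu2.1]
        _ ≤ |u - b/a| := abs_abs_sub_abs_le_abs_sub _ _
    have key : CB * ρ ^ (min (1-β) γ - γ) ≤ (CA + CB) * ρ ^ (-γ+q) := by
      apply mul_le_mul (by linarith)
        (Real.rpow_le_rpow_of_exponent_ge hρ0 hρ1.le (by
          have := hq.2; linarith)) (Real.rpow_nonneg hρ0.le _) (by linarith)
    exact (mul_le_mul_right (hae.trans (hB ρ hρ0 hρ1.le)) _).trans
      (final CB (min (1-β) γ - γ) hCB.le key)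

lemma part_i {α β γ : ℝ} (hα : α ∈ Set.Ioo (0:ℝ) 1) (hβ : β ∈ Set.Ioo (0:ℝ) 1)
    (hγ : γ ∈ Set.Ioo (0:ℝ) 1) (h1 : β + γ ≠ 1) {q : ℝ}
    (hq : q ∈ Set.Icc 0 (min (1 - β) γ)) :
    ∃ C : ℝ, 0 < C ∧ ∀ a b : ℝ, a ≠ 0 → b ≠ 0 →
      B1 α β γ a b ≤ ENNReal.ofReal (C * |a| ^ (-q) * |b| ^ (-γ + q)) := by
  obtain ⟨C, hC, hcore⟩ := core hβ.1 hβ.2 hγ.1 hγ.2 h1 hq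
  refine ⟨(2:ℝ)^α * C, by positivity, fun a b ha hb => ?_⟩
  have step1 : B1 α β γ a b ≤ ENNReal.ofReal ((2:ℝ)^α) *
      ∫⁻ u in Set.Ioo (0:ℝ) (1/2), ENNReal.ofReal (u ^ (-β) * |a*u - b| ^ (-γ)) := by
    rw [← lintegral_const_mul' _ _ ENNReal.ofReal_ne_top]
    apply setLIntegral_mono' measurableSet_Ioo
    intro u hu
    rw [← ENNReal.ofReal_mul (Real.rpow_nonneg (by norm_num) _)]
    apply ENNReal.ofReal_le_ofReal
    have h2 : (1 - u) ^ (-α) ≤ (2:ℝ)^α := by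
      have he : (1/2:ℝ) ^ (-α) = (2:ℝ)^α := by
        rw [inv_base_rpow 2 (-α) (by norm_num), neg_neg]
      rw [← he]
      exact Real.rpow_le_rpow_of_nonpos (by norm_num) (by linarith [hu.2]) (by linarith [hα.1])
    calc u ^ (-β) * (1 - u) ^ (-α) * |a*u - b| ^ (-γ)
        = (1 - u) ^ (-α) * (u ^ (-β) * |a*u - b| ^ (-γ)) := by ring
      _ ≤ (2:ℝ)^α * (u ^ (-β) * |a*u - b| ^ (-γ)) := by
          apply mul_le_mul_of_nonneg_right h2
          exact mul_nonneg (Real.rpow_nonneg hu.1.le _) (Real.rpow_nonneg (abs_nonneg _) _)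
  refine step1.trans ?_
  refine (mul_le_mul_right (hcore a b ha hb) _).trans ?_
  rw [← ENNReal.ofReal_mul (Real.rpow_nonneg (by norm_num) _)]
  apply ENNReal.ofReal_le_ofReal
  apply le_of_eq; ring

lemma B2_eq (α β γ a b : ℝ) : B2 α β γ a b = B1 β α γ a (a - b) := by
  unfold B1 B2
  have hpre : (fun x : ℝ => 1 - x) ⁻¹' (Set.Ioo (1/2 : ℝ) 1) = Set.Ioo (0:ℝ) (1/2) := by
    rw [Set.preimage_const_sub_Ioo]; norm_num
  rw [← lint_reflect
    (fun u => ENNReal.ofReal (u ^ (-β) * (1 - u) ^ (-α) * |a * u - b| ^ (-γ))), hpre]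
  apply setLIntegral_congr_fun measurableSet_Ioo
  intro x hx; dsimp only
  have h1 : (1:ℝ) - (1 - x) = x := by ring
  have h2 : |a * (1 - x) - b| = |a * x - (a - b)| := by
    rw [abs_sub_comm]; congr 1; ring
  rw [h1, h2]; ring_nf

end Helpers

/-- For `α, β, γ ∈ (0,1)` with `β + γ ≠ 1` and `α + γ ≠ 1`:
(i) for every `q ∈ [0, min(1−β, γ)]` there is `C > 0` with
`𝔅_1(a,b) ≤ C |a|^{−q} |b|^{−γ+q}` for all `a, b, b−a` nonzero;
(ii) for every `q ∈ [0, min(1−α, γ)]` there is `C > 0` with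
`𝔅_2(a,b) ≤ C |a|^{−q} |b−a|^{−γ+q}` for all `a` and `b−a` nonzero. -/
theorem B1_B2_bounds (α β γ : ℝ) (hα : α ∈ Set.Ioo (0 : ℝ) 1)
    (hβ : β ∈ Set.Ioo (0 : ℝ) 1) (hγ : γ ∈ Set.Ioo (0 : ℝ) 1)
    (h1 : β + γ ≠ 1) (h2 : α + γ ≠ 1) :
    (∀ q : ℝ, q ∈ Set.Icc 0 (min (1 - β) γ) →
      ∃ C : ℝ, 0 < C ∧ ∀ a b : ℝ, a ≠ 0 → b ≠ 0 → b - a ≠ 0 →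
        B1 α β γ a b ≤ ENNReal.ofReal (C * |a| ^ (-q) * |b| ^ (-γ + q))) ∧
    (∀ q : ℝ, q ∈ Set.Icc 0 (min (1 - α) γ) →
      ∃ C : ℝ, 0 < C ∧ ∀ a b : ℝ, a ≠ 0 → b - a ≠ 0 →
        B2 α β γ a b ≤ ENNReal.ofReal (C * |a| ^ (-q) * |b - a| ^ (-γ + q))) := by
  constructor
  · intro q hq
    obtain ⟨C, hC, h⟩ := part_i hα hβ hγ h1 hq
    exact ⟨C, hC, fun a b ha hb _ => h a b ha hb⟩
  · intro q hq
    obtain ⟨C, hC, h⟩ := part_i hβ hα hγ h2 hq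
    refine ⟨C, hC, fun a b ha hba => ?_⟩
    rw [B2_eq]
    have hab : a - b ≠ 0 := by intro h0; apply hba; linarith
    have := h a (a - b) ha hab
    rwa [show |a - b| = |b - a| from abs_sub_comm a b] at this
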